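/- In the secretary-with-samples model, where n+k distinct values are randomly split into k samples and n online candidates in random order, the probability that the i-th online candidate is the best of the n online candidates AND exactly s of the k samples are smaller than it equals (1/(k+1)) · ∏_{t=1}^{n-1} (s+t)/(k+t+1). -/

import Mathlib

open scoped Classical
open Finset


lemma aux_filter_lt_card (m k : ℕ) (hk : k ≤ m) :
    (Finset.univ.filter (fun q : Fin m => (q : ℕ) < k)).card = k := by
  have h : (Finset.univ.filter (fun q : Fin m => (q : ℕ) < k)).card
      = (Finset.univ : Finset (Fin k)).card := by
    refine Finset.card_bij' (fun q hq => (⟨(q : ℕ), by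
        simp only [Finset.mem_filter] at hq; omega⟩ : Fin k))
      (fun r _ => (⟨(r : ℕ), by omega⟩ : Fin m)) ?_ ?_ ?_ ?_
    · intro a ha; simp
    · intro a ha; simp
    · intro a ha; simp
    · intro a ha; simp
  simpa using h

lemma aux_below_card (m : ℕ) (σ : Equiv.Perm (Fin m)) (c : Fin m) :
    (Finset.univ.filter (fun q => σ q < c)).card = (c : ℕ) := by
  have h : Finset.univ.filter (fun q => σ q < c)
      = (Finset.Iio c).map σ.symm.toEmbedding := by
    ext q
    simp only [Finset.mem_filter, Finset.mem_univ, true_and, Finset.mem_map,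
      Finset.mem_Iio, Equiv.coe_toEmbedding]
    constructor
    · intro h; exact ⟨σ q, h, σ.symm_apply_apply q⟩
    · rintro ⟨w, hw, rfl⟩; simpa using hw
  rw [h, Finset.card_map, Fin.card_Iio]

lemma aux_card_lt_sub (m : ℕ) (v : Fin m) :
    Fintype.card {w : Fin m // w < v} = (v : ℕ) := by
  rw [Fintype.card_subtype]
  have : Finset.univ.filter (fun w : Fin m => w < v) = Finset.Iio v := by
    ext w; simp
  rw [this, Fin.card_Iio]

lemma aux_card_ne (n : ℕ) (j0 : Fin n) :
    Fintype.card {j : Fin n // j ≠ j0} = n - 1 := by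
  have := Fintype.card_subtype_compl (fun j : Fin n => j = j0)
  simpa [Fintype.card_subtype_eq] using this

lemma aux_G_card (n k : ℕ) (j0 : Fin n) (v : Fin (n + k)) :
    (Finset.univ.filter (fun g : Fin n → Fin (n + k) =>
      Function.Injective g ∧ g j0 = v ∧ ∀ j, j ≠ j0 → g j < v)).card
      = ((v : ℕ)).descFactorial (n - 1) := by
  have h : (Finset.univ.filter (fun g : Fin n → Fin (n + k) =>
      Function.Injective g ∧ g j0 = v ∧ ∀ j, j ≠ j0 → g j < v)).card
      = (Finset.univ : Finset ({j : Fin n // j ≠ j0} ↪ {w : Fin (n + k) // w < v})).card := by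
    refine Finset.card_bij'
      (fun g hg => ⟨fun j => ⟨g j.1, by
          have := (Finset.mem_filter.mp hg).2; exact this.2.2 j.1 j.2⟩,
        by
          intro x y hxy
          have hg' := (Finset.mem_filter.mp hg).2.1
          exact Subtype.ext (hg' (congrArg Subtype.val hxy))⟩)
      (fun e _ => fun j => if h : j = j0 then v else (e ⟨j, h⟩).1) ?_ ?_ ?_ ?_
    · intro a ha; simp
    · intro e he
      simp only [Finset.mem_filter, Finset.mem_univ, true_and]
      refine ⟨?_, by simp, ?_⟩
      · intro a b hab
        dsimp only at hab
        by_cases ha : a = j0 <;> by_cases hb : b = j0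
        · rw [ha, hb]
        · exfalso; rw [dif_pos ha, dif_neg hb] at hab
          have h2 := (e ⟨b, hb⟩).2; rw [← hab] at h2; exact lt_irrefl v h2
        · exfalso; rw [dif_neg ha, dif_pos hb] at hab
          have h2 := (e ⟨a, ha⟩).2; rw [hab] at h2; exact lt_irrefl v h2
        · rw [dif_neg ha, dif_neg hb] at hab
          have := e.injective (Subtype.ext hab)
          exact congrArg Subtype.val this
      · intro j hj; rw [dif_neg hj]; exact (e ⟨j, hj⟩).2
    · intro g hg
      funext j
      by_cases h : j = j0
      · rw [dif_pos h, h]; exact ((Finset.mem_filter.mp hg).2.2.1).symm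
      · rw [dif_neg h]; rfl
    · intro e he
      ext j
      simp only [Function.Embedding.coeFn_mk]
      exact congrArg (fun x : Fin (n + k) => (x : ℕ)) (dif_neg j.2)
  rw [h]
  have := Fintype.card_embedding_eq (α := {j : Fin n // j ≠ j0}) (β := {w : Fin (n + k) // w < v})
  rw [Finset.card_univ, this, aux_card_lt_sub, aux_card_ne]

lemma aux_fiber_card (n k : ℕ) (g : Fin n → Fin (n + k)) (hg : Function.Injective g) :
    (Finset.univ.filter (fun σ : Equiv.Perm (Fin (n + k)) =>
      ∀ j : Fin n, σ (⟨k + (j : ℕ), by omega⟩ : Fin (n + k)) = g j)).card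
      = Nat.factorial k := by
  have cardA : Fintype.card {p : Fin (n + k) // (p : ℕ) < k} = k := by
    rw [Fintype.card_subtype]
    exact aux_filter_lt_card (n + k) k (by omega)
  have cardRange : Fintype.card {w : Fin (n + k) // ∃ j, g j = w} = n := by
    rw [Fintype.card_subtype]
    have : Finset.univ.filter (fun w : Fin (n + k) => ∃ j, g j = w)
        = Finset.image g Finset.univ := by
      ext w; simp [eq_comm]
    rw [this, Finset.card_image_of_injective _ hg, Finset.card_univ, Fintype.card_fin]
  have cardB : Fintype.card {w : Fin (n + k) // ¬ ∃ j, g j = w} = k := by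
    rw [Fintype.card_subtype_compl, cardRange, Fintype.card_fin]; omega
  have h : (Finset.univ.filter (fun σ : Equiv.Perm (Fin (n + k)) =>
      ∀ j : Fin n, σ (⟨k + (j : ℕ), by omega⟩ : Fin (n + k)) = g j)).card
      = (Finset.univ : Finset
          ({p : Fin (n + k) // (p : ℕ) < k} ≃ {w : Fin (n + k) // ¬ ∃ j, g j = w})).card := by
    have fmem : ∀ (σ : Equiv.Perm (Fin (n + k))),
        (∀ j : Fin n, σ (⟨k + (j : ℕ), by omega⟩ : Fin (n + k)) = g j) →
        ∀ a : {p : Fin (n + k) // (p : ℕ) < k}, ¬ ∃ j, g j = σ a.1 := by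
      rintro σ hσ a ⟨j, hj⟩
      have h1 : σ (⟨k + (j : ℕ), by omega⟩ : Fin (n + k)) = σ a.1 := by rw [hσ j, hj]
      have h2 := congrArg Fin.val (σ.injective h1)
      simp only [Fin.val_mk] at h2
      have := a.2
      omega
    have gmem : ∀ (σ : Equiv.Perm (Fin (n + k))),
        (∀ j : Fin n, σ (⟨k + (j : ℕ), by omega⟩ : Fin (n + k)) = g j) →
        ∀ b : {w : Fin (n + k) // ¬ ∃ j, g j = w}, (σ.symm b.1 : ℕ) < k := by
      intro σ hσ b
      by_contra hcon
      push_neg at hcon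
      apply b.2
      have hlt : ((σ.symm b.1 : Fin (n + k)) : ℕ) - k < n := by
        have := (σ.symm b.1).2; omega
      refine ⟨⟨((σ.symm b.1 : Fin (n + k)) : ℕ) - k, hlt⟩, ?_⟩
      have heq : (⟨k + ((⟨((σ.symm b.1 : Fin (n + k)) : ℕ) - k, hlt⟩ : Fin n) : ℕ), by
          omega⟩ : Fin (n + k)) = σ.symm b.1 := by
        ext; simp only [Fin.val_mk]; omega
      have h3 := hσ ⟨((σ.symm b.1 : Fin (n + k)) : ℕ) - k, hlt⟩
      rw [heq, Equiv.apply_symm_apply] at h3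
      exact h3.symm
    refine Finset.card_bij'
      (fun σ hσ =>
        { toFun := fun a => ⟨σ a.1, fmem σ (by simpa using (Finset.mem_filter.mp hσ).2) a⟩
          invFun := fun b => ⟨σ.symm b.1, gmem σ (by simpa using (Finset.mem_filter.mp hσ).2) b⟩
          left_inv := fun a => Subtype.ext (σ.symm_apply_apply a.1)
          right_inv := fun b => Subtype.ext (σ.apply_symm_apply b.1) })
      (fun e _ => ?_) ?_ ?_ ?_ ?_
    · refine Equiv.ofBijective
        (fun p => if h : (p : ℕ) < k then (e ⟨p, h⟩).1 else g ⟨(p : ℕ) - k, by have := p.2; omega⟩)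
        ((Finite.injective_iff_bijective).mp ?_)
      intro p q hpq
      dsimp only at hpq
      by_cases hp : (p : ℕ) < k <;> by_cases hq : (q : ℕ) < k
      · rw [dif_pos hp, dif_pos hq] at hpq
        exact congrArg Subtype.val (e.injective (Subtype.ext hpq))
      · exfalso; rw [dif_pos hp, dif_neg hq] at hpq
        exact (e ⟨p, hp⟩).2 ⟨_, hpq.symm⟩
      · exfalso; rw [dif_neg hp, dif_pos hq] at hpq
        exact (e ⟨q, hq⟩).2 ⟨_, hpq⟩
      · rw [dif_neg hp, dif_neg hq] at hpq
        have h2 := congrArg Fin.val (hg hpq)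
        simp only [Fin.val_mk] at h2
        have hp2 := p.2; have hq2 := q.2
        ext; omega
    · intro a ha; simp
    · intro e he
      simp only [Finset.mem_filter, Finset.mem_univ, true_and]
      intro j
      rw [Equiv.ofBijective_apply]
      rw [dif_neg (by simp)]
      congr 1
      ext; simp only [Fin.val_mk]; omega
    · intro σ hσ
      apply Equiv.ext
      intro p
      rw [Equiv.ofBijective_apply]
      by_cases hp : (p : ℕ) < k
      · rw [dif_pos hp]; rfl
      · rw [dif_neg hp]
        have hlt : (p : ℕ) - k < n := by have := p.2; omega
        have heq : (⟨k + ((⟨(p : ℕ) - k, hlt⟩ : Fin n) : ℕ), by omega⟩ : Fin (n + k)) = p := by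
          ext; simp only [Fin.val_mk]; omega
        have h3 := (Finset.mem_filter.mp hσ).2 ⟨(p : ℕ) - k, hlt⟩
        rw [heq] at h3
        exact h3.symm
    · intro e he
      apply Equiv.ext
      intro a
      apply Subtype.ext
      show (Equiv.ofBijective _ _) a.1 = (e a).1
      rw [Equiv.ofBijective_apply, dif_pos a.2]
  rw [h, Finset.card_univ, Fintype.card_equiv (Fintype.equivOfCardEq (by rw [cardA, cardB])),
    cardA]

lemma aux_arith (k s : ℕ) : ∀ N : ℕ,
    (((N + s).descFactorial N * Nat.factorial k : ℕ) : ℚ) /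
      ((Nat.factorial (N + 1 + k) : ℕ) : ℚ)
    = (1 / ((k : ℚ) + 1)) *
        ∏ t ∈ Finset.Icc 1 N, (((s : ℚ) + (t : ℚ)) / ((k : ℚ) + (t : ℚ) + 1)) := by
  intro N
  induction N with
  | zero =>
    rw [show (0:ℕ) + 1 + k = k + 1 from by omega]
    simp [Nat.factorial_succ]
    have hf : ((Nat.factorial k : ℕ) : ℚ) ≠ 0 := by
      exact_mod_cast (Nat.factorial_pos k).ne'
    rw [mul_comm ((k : ℚ) + 1), ← div_div, div_self hf, one_div]
  | succ N ih =>
    have hins : Finset.Icc 1 (N + 1) = insert (N + 1) (Finset.Icc 1 N) := by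
      ext x; simp only [Finset.mem_Icc, Finset.mem_insert]; omega
    rw [hins, Finset.prod_insert (by simp)]
    have e1 : (N + 1 + s).descFactorial (N + 1) = (N + s + 1) * ((N + s).descFactorial N) := by
      rw [show N + 1 + s = (N + s) + 1 from by omega]
      exact Nat.succ_descFactorial_succ _ _
    have e2 : Nat.factorial (N + 1 + 1 + k) = (N + k + 2) * Nat.factorial (N + 1 + k) := by
      rw [show N + 1 + 1 + k = (N + 1 + k) + 1 from by omega, Nat.factorial_succ]
      ring_nf
    rw [e1, e2]
    push_cast
    push_cast at ih
    rw [mul_assoc, mul_div_mul_comm, ih]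
    push_cast
    ring

noncomputable def Phimap (n k : ℕ) (σ : Equiv.Perm (Fin (n + k))) : Fin n → Fin (n + k) :=
  fun j => σ (⟨k + (j : ℕ), by omega⟩ : Fin (n + k))

noncomputable def Gset (n k : ℕ) (j0 : Fin n) (v : Fin (n + k)) :
    Finset (Fin n → Fin (n + k)) :=
  Finset.univ.filter (fun g : Fin n → Fin (n + k) =>
    Function.Injective g ∧ g j0 = v ∧ ∀ j, j ≠ j0 → g j < v)

lemma aux_main (n k : ℕ) (j0 : Fin n) (v pstar : Fin (n + k))
    (hps : (pstar : ℕ) = k + (j0 : ℕ)) :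
    (Finset.univ.filter (fun σ : Equiv.Perm (Fin (n + k)) =>
      σ pstar = v ∧ ∀ q : Fin (n + k), k ≤ (q : ℕ) → q ≠ pstar → σ q < v)).card
      = ((v : ℕ)).descFactorial (n - 1) * Nat.factorial k := by
  have hjp : ∀ j : Fin n, (⟨k + (j : ℕ), by omega⟩ : Fin (n + k)) = pstar ↔ j = j0 := by
    intro j
    constructor
    · intro h
      have h2 := congrArg Fin.val h
      simp only [Fin.val_mk] at h2
      apply Fin.ext; omega
    · intro h; subst h; apply Fin.ext; simp only [Fin.val_mk]; omega
  have hiff : ∀ σ : Equiv.Perm (Fin (n + k)),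
      (σ pstar = v ∧ ∀ q : Fin (n + k), k ≤ (q : ℕ) → q ≠ pstar → σ q < v)
      ↔ Phimap n k σ ∈ Gset n k j0 v := by
    intro σ
    rw [Gset, Finset.mem_filter]
    constructor
    · rintro ⟨h1, h2⟩
      refine ⟨Finset.mem_univ _, ?_, ?_, ?_⟩
      · intro a b hab
        have h3 := congrArg Fin.val (σ.injective hab)
        simp only [Fin.val_mk] at h3
        exact Fin.ext (by omega)
      · show σ _ = v
        rw [(hjp j0).mpr rfl]; exact h1
      · intro j hj
        refine h2 _ (by simp [Phimap]) ?_
        rw [Ne, hjp j]; exact hj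
    · rintro ⟨-, hinj, h1, h2⟩
      constructor
      · rw [← (hjp j0).mpr rfl]; exact h1
      · intro q hq hne
        have hlt : (q : ℕ) - k < n := by have := q.2; omega
        have hqeq : (⟨k + ((⟨(q : ℕ) - k, hlt⟩ : Fin n) : ℕ), by omega⟩ : Fin (n + k)) = q := by
          apply Fin.ext; simp only [Fin.val_mk]; omega
        have hne' : (⟨(q : ℕ) - k, hlt⟩ : Fin n) ≠ j0 := by
          intro h
          apply hne
          rw [← hqeq, (hjp _).mpr h]
        have h3 := h2 _ hne'
        rw [Phimap] at h3
        dsimp only at h3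
        rwa [hqeq] at h3
  have hfc2 := Finset.filter_congr (s := (Finset.univ : Finset (Equiv.Perm (Fin (n + k)))))
    (fun σ _ => hiff σ)
  rw [hfc2]
  have hmemmap : ∀ σ ∈ Finset.univ.filter (fun σ : Equiv.Perm (Fin (n + k)) =>
      Phimap n k σ ∈ Gset n k j0 v), Phimap n k σ ∈ Gset n k j0 v := by
    intro σ hσ; exact (Finset.mem_filter.mp hσ).2
  rw [Finset.card_eq_sum_card_fiberwise hmemmap]
  have hfib : ∀ g ∈ Gset n k j0 v,
      ((Finset.univ.filter (fun σ : Equiv.Perm (Fin (n + k)) =>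
        Phimap n k σ ∈ Gset n k j0 v)).filter
        (fun σ => Phimap n k σ = g)).card = Nat.factorial k := by
    intro g hg
    have hg' : g ∈ Finset.univ.filter (fun g : Fin n → Fin (n + k) =>
        Function.Injective g ∧ g j0 = v ∧ ∀ j, j ≠ j0 → g j < v) := by rwa [Gset] at hg
    have hgi : Function.Injective g := (Finset.mem_filter.mp hg').2.1
    have heq : ((Finset.univ.filter (fun σ : Equiv.Perm (Fin (n + k)) =>
        Phimap n k σ ∈ Gset n k j0 v)).filter (fun σ => Phimap n k σ = g))
        = Finset.univ.filter (fun σ : Equiv.Perm (Fin (n + k)) =>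
          ∀ j : Fin n, σ (⟨k + (j : ℕ), by omega⟩ : Fin (n + k)) = g j) := by
      rw [Finset.filter_filter]
      ext σ
      simp only [Finset.mem_filter, Finset.mem_univ, true_and]
      constructor
      · rintro ⟨-, h⟩
        intro j; rw [← h]; rfl
      · intro h
        have hfun : Phimap n k σ = g := funext h
        exact ⟨hfun ▸ hg, hfun⟩
    rw [heq]
    exact aux_fiber_card n k g hgi
  rw [Finset.sum_congr rfl hfib, Finset.sum_const, smul_eq_mul, Gset,
    aux_G_card n k j0 v]


/-- Secretary with samples: place a uniformly random total order on `n+k` elements, where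
positions `0,…,k-1` are the samples and positions `k,…,k+n-1` are the online candidates in
arrival order.  For the `i`-th online candidate (`1 ≤ i ≤ n`) and a signal value `s ≤ k`,
the probability that it is the best of the `n` online candidates and exactly `s` of the `k`
samples are smaller than it equals `(1/(k+1)) · ∏_{t=1}^{n-1} (s+t)/(k+t+1)`. -/
theorem stmt_6 (n k i s : ℕ) (hi : 1 ≤ i) (hin : i ≤ n) (hs : s ≤ k) :
    ((Finset.univ.filter (fun σ : Equiv.Perm (Fin (n + k)) =>
        (∀ q : Fin (n + k), k ≤ (q : ℕ) → q ≠ (⟨k + i - 1, by omega⟩ : Fin (n + k)) →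
          σ q < σ (⟨k + i - 1, by omega⟩ : Fin (n + k))) ∧
        (Finset.univ.filter (fun p : Fin (n + k) =>
          (p : ℕ) < k ∧ σ p < σ (⟨k + i - 1, by omega⟩ : Fin (n + k)))).card = s)).card : ℚ) /
      ((Finset.univ : Finset (Equiv.Perm (Fin (n + k)))).card : ℚ) =
      (1 / ((k : ℚ) + 1)) *
        ∏ t ∈ Finset.Icc 1 (n - 1), (((s : ℚ) + (t : ℚ)) / ((k : ℚ) + (t : ℚ) + 1)) := by
  have hn : 1 ≤ n := hi.trans hin
  set pstar : Fin (n + k) := ⟨k + i - 1, by omega⟩ with hpstar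
  set v : Fin (n + k) := ⟨n + s - 1, by omega⟩ with hv
  -- auxiliary cardinality facts
  have hnk : (Finset.univ.filter fun q : Fin (n + k) => ¬ (q : ℕ) < k).card = n := by
    have h := Finset.card_filter_add_card_filter_not
      (s := (Finset.univ : Finset (Fin (n + k)))) (p := fun q => (q : ℕ) < k)
    rw [aux_filter_lt_card (n + k) k (by omega), Finset.card_univ, Fintype.card_fin] at h
    omega
  have main_count : ∀ (σ : Equiv.Perm (Fin (n + k))) (c : Fin (n + k)),
      (∀ q : Fin (n + k), k ≤ (q : ℕ) → q ≠ pstar → σ q < c) → ¬ (σ pstar < c) →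
      (c : ℕ) = (Finset.univ.filter fun q : Fin (n + k) =>
        (q : ℕ) < k ∧ σ q < c).card + (n - 1) := by
    intro σ c H Hp
    have hsplit := Finset.card_filter_add_card_filter_not
      (s := Finset.univ.filter (fun q : Fin (n + k) => σ q < c)) (p := fun q => (q : ℕ) < k)
    rw [Finset.filter_filter, Finset.filter_filter, aux_below_card] at hsplit
    have h1 : Finset.univ.filter (fun q : Fin (n + k) => σ q < c ∧ (q : ℕ) < k)
        = Finset.univ.filter (fun q : Fin (n + k) => (q : ℕ) < k ∧ σ q < c) := by
      ext q; simp only [Finset.mem_filter]; tauto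
    have h2 : Finset.univ.filter (fun q : Fin (n + k) => σ q < c ∧ ¬ (q : ℕ) < k)
        = (Finset.univ.filter (fun q : Fin (n + k) => ¬ (q : ℕ) < k)).erase pstar := by
      ext q
      simp only [Finset.mem_filter, Finset.mem_erase, Finset.mem_univ, true_and]
      constructor
      · rintro ⟨h3, h4⟩
        refine ⟨fun he => Hp ?_, h4⟩
        rw [← he]; exact h3
      · rintro ⟨hne, h3⟩
        exact ⟨H q (by omega) hne, h3⟩
    have hmem : pstar ∈ Finset.univ.filter (fun q : Fin (n + k) => ¬ (q : ℕ) < k) := by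
      simp only [Finset.mem_filter, Finset.mem_univ, true_and, hpstar, Fin.val_mk]
      omega
    rw [h1, h2, Finset.card_erase_of_mem hmem, hnk] at hsplit
    have hcard1 : (Finset.univ.filter fun q : Fin (n + k) =>
        (q : ℕ) < k ∧ σ q < c).card ≤ (n + k) := by
      calc _ ≤ (Finset.univ : Finset (Fin (n + k))).card := Finset.card_le_card (by simp)
        _ = n + k := by simp
    omega
  have key : ∀ σ : Equiv.Perm (Fin (n + k)),
      ((∀ q : Fin (n + k), k ≤ (q : ℕ) → q ≠ pstar → σ q < σ pstar) ∧
        (Finset.univ.filter (fun p : Fin (n + k) =>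
          (p : ℕ) < k ∧ σ p < σ pstar)).card = s)
      ↔ (σ pstar = v ∧ ∀ q : Fin (n + k), k ≤ (q : ℕ) → q ≠ pstar → σ q < v) := by
    intro σ
    constructor
    · rintro ⟨HA, HB⟩
      have hc := main_count σ (σ pstar) HA (lt_irrefl _)
      rw [HB] at hc
      have hveq : σ pstar = v := by
        apply Fin.ext
        rw [hv]; simp only [Fin.val_mk]; omega
      exact ⟨hveq, fun q hq hne => hveq ▸ HA q hq hne⟩
    · rintro ⟨hveq, HA'⟩
      have HA : ∀ q : Fin (n + k), k ≤ (q : ℕ) → q ≠ pstar → σ q < σ pstar := by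
        intro q hq hne; rw [hveq]; exact HA' q hq hne
      refine ⟨HA, ?_⟩
      have hc := main_count σ (σ pstar) HA (lt_irrefl _)
      have hval : ((σ pstar : Fin (n + k)) : ℕ) = n + s - 1 := by rw [hveq, hv]
      omega
  have hfc := Finset.filter_congr (s := (Finset.univ : Finset (Equiv.Perm (Fin (n + k)))))
    (fun σ _ => key σ)
  rw [hfc]
  have hps : (pstar : ℕ) = k + ((⟨i - 1, by omega⟩ : Fin n) : ℕ) := by
    rw [hpstar]; simp only [Fin.val_mk]; omega
  rw [aux_main n k ⟨i - 1, by omega⟩ v pstar hps]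
  rw [Finset.card_univ, Fintype.card_perm, Fintype.card_fin]
  have harith := aux_arith k s (n - 1)
  rw [show (n - 1) + s = n + s - 1 from by omega,
    show (n - 1) + 1 + k = n + k from by omega] at harith
  rw [hv]
  exact harith
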